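/- The set Ê_∞ of maximal (ultrafilter) characters of E is closed in the space Ê₀ of all characters; hence the tight spectrum Ê_tight, defined as the closure of Ê_∞ in Ê₀, equals Ê_∞. -/

import Mathlib

open ContinuousLinearMap
open scoped Classical

noncomputable section

namespace SOq

variable {H : Type} [NormedAddCommGroup H] [InnerProductSpace ℂ H] [CompleteSpace H]

/-- `pj A = 1 - A* A`; for the left shift this is the rank-one projection onto `e 0`. -/
def pj (A : H →L[ℂ] H) : H →L[ℂ] H := 1 - adjoint A * A

/-- `B₁(r,n,m) = S*^{n₁} S^{m₁} ⊗ S*^{n₁} S^{m₁} ⊗ t^r`, where `A`, `B'` are the shifts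
acting on the first, resp. second, tensor factor and `T' r` is `1 ⊗ 1 ⊗ t^r`. -/
def B1 (A B' : H →L[ℂ] H) (T' : ℤ → (H →L[ℂ] H)) (r : ℤ) (n m : ℕ × ℕ) : H →L[ℂ] H :=
  (adjoint A) ^ n.1 * A ^ m.1 * (adjoint B') ^ n.1 * B' ^ m.1 * T' r

/-- `B₂(r,n,m) = S*^{n₁} S^{m₁} ⊗ S*^{n₂} p S^{m₂} ⊗ t^r`. -/
def B2 (A B' : H →L[ℂ] H) (T' : ℤ → (H →L[ℂ] H)) (r : ℤ) (n m : ℕ × ℕ) : H →L[ℂ] H :=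
  (adjoint A) ^ n.1 * A ^ m.1 * (adjoint B') ^ n.2 * pj B' * B' ^ m.2 * T' r

/-- `B₃(r,n,m) = S*^{n₁} p S^{m₁} ⊗ S*^{n₂} S^{m₂} ⊗ t^r`. -/
def B3 (A B' : H →L[ℂ] H) (T' : ℤ → (H →L[ℂ] H)) (r : ℤ) (n m : ℕ × ℕ) : H →L[ℂ] H :=
  (adjoint A) ^ n.1 * pj A * A ^ m.1 * (adjoint B') ^ n.2 * B' ^ m.2 * T' r

/-- `B₄(r,n,m) = S*^{n₁} p S^{m₁} ⊗ S*^{n₂} p S^{m₂} ⊗ t^r`. -/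
def B4 (A B' : H →L[ℂ] H) (T' : ℤ → (H →L[ℂ] H)) (r : ℤ) (n m : ℕ × ℕ) : H →L[ℂ] H :=
  (adjoint A) ^ n.1 * pj A * A ^ m.1 * (adjoint B') ^ n.2 * pj B' * B' ^ m.2 * T' r

/-- `P_i(n) = B_i(0,n,n)`. -/
def P1 (A B' : H →L[ℂ] H) (T' : ℤ → (H →L[ℂ] H)) (n : ℕ × ℕ) : H →L[ℂ] H := B1 A B' T' 0 n n
def P2 (A B' : H →L[ℂ] H) (T' : ℤ → (H →L[ℂ] H)) (n : ℕ × ℕ) : H →L[ℂ] H := B2 A B' T' 0 n n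
def P3 (A B' : H →L[ℂ] H) (T' : ℤ → (H →L[ℂ] H)) (n : ℕ × ℕ) : H →L[ℂ] H := B3 A B' T' 0 n n
def P4 (A B' : H →L[ℂ] H) (T' : ℤ → (H →L[ℂ] H)) (n : ℕ × ℕ) : H →L[ℂ] H := B4 A B' T' 0 n n

/-- The hypotheses identifying `H` with `ℓ²(ℕ)⊗ℓ²(ℕ)⊗ℓ²(ℤ)` with orthonormal basis `e`,
`A = S⊗1⊗1`, `B' = 1⊗S⊗1` (left shifts) and `T' r = 1⊗1⊗t^r` (bilateral shift powers). -/
def ShiftHyp (e : HilbertBasis (ℕ × ℕ × ℤ) ℂ H) (A B' : H →L[ℂ] H)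
    (T' : ℤ → (H →L[ℂ] H)) : Prop :=
  (∀ (j : ℕ) (k : ℤ), A (e (0, j, k)) = 0) ∧
  (∀ (i j : ℕ) (k : ℤ), A (e (i + 1, j, k)) = e (i, j, k)) ∧
  (∀ (i : ℕ) (k : ℤ), B' (e (i, 0, k)) = 0) ∧
  (∀ (i j : ℕ) (k : ℤ), B' (e (i, j + 1, k)) = e (i, j, k)) ∧
  (∀ (r : ℤ) (i j : ℕ) (k : ℤ), T' r (e (i, j, k)) = e (i, j, k + r))

/-- The inverse semigroup `T`: zero together with all admissible words `B_i(r,n,m)`. -/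
def TSet (A B' : H →L[ℂ] H) (T' : ℤ → (H →L[ℂ] H)) : Set (H →L[ℂ] H) :=
  {0} ∪ {x | ∃ n m : ℕ × ℕ, x = B1 A B' T' ((m.1 : ℤ) - n.1) n m} ∪
  {x | ∃ n m : ℕ × ℕ, n.2 ≤ n.1 ∧ m.2 ≤ m.1 ∧ x = B2 A B' T' ((m.1 : ℤ) - n.1) n m} ∪
  {x | ∃ n m : ℕ × ℕ, n.1 ≤ n.2 ∧ m.1 ≤ m.2 ∧ x = B3 A B' T' ((m.2 : ℤ) - n.2) n m} ∪
  {x | ∃ (r : ℤ) (n m : ℕ × ℕ), x = B4 A B' T' r n m}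

/-- The projection semilattice `E` of `T`. -/
def ESet (A B' : H →L[ℂ] H) (T' : ℤ → (H →L[ℂ] H)) : Set (H →L[ℂ] H) :=
  {0} ∪ {x | ∃ n : ℕ, x = P1 A B' T' (n, n)} ∪
  {x | ∃ n : ℕ × ℕ, n.2 ≤ n.1 ∧ x = P2 A B' T' n} ∪
  {x | ∃ n : ℕ × ℕ, n.1 ≤ n.2 ∧ x = P3 A B' T' n} ∪
  {x | ∃ n : ℕ × ℕ, x = P4 A B' T' n}

/-- A filter in a semilattice-with-zero `E` of projections (`e ≤ f ↔ e * f = e`). -/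
def IsFilterIn {X : Type} [Ring X] (E A : Set X) : Prop :=
  A ⊆ E ∧ (0 : X) ∉ A ∧ (∀ a ∈ A, ∀ f ∈ E, a * f = a → f ∈ A) ∧ ∀ a ∈ A, ∀ b ∈ A, a * b ∈ A

/-- An ultrafilter: a maximal filter. -/
def IsUltrafilterIn {X : Type} [Ring X] (E A : Set X) : Prop :=
  IsFilterIn E A ∧ ∀ B, IsFilterIn E B → A ⊆ B → B = A

/-- `A_{Λ(k)}` for finite `k ∈ ℕ²`. -/
def ALamFin (A B' : H →L[ℂ] H) (T' : ℤ → (H →L[ℂ] H)) (k : ℕ × ℕ) : Set (H →L[ℂ] H) :=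
  {x | ∃ n : ℕ, n ≤ min k.1 k.2 ∧ x = P1 A B' T' (n, n)} ∪
  {x | ∃ n : ℕ × ℕ, n.2 = k.2 ∧ n.2 ≤ n.1 ∧ n.1 ≤ k.1 ∧ x = P2 A B' T' n} ∪
  {x | ∃ n : ℕ × ℕ, n.1 = k.1 ∧ n.1 ≤ n.2 ∧ n.2 ≤ k.2 ∧ x = P3 A B' T' n} ∪
  {P4 A B' T' k}

/-- `A_{Λ(k)}` for `k ∈ (ℕ∪{∞})²`, with `∞` encoded as `none`. -/
def ALam (A B' : H →L[ℂ] H) (T' : ℤ → (H →L[ℂ] H)) :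
    Option ℕ × Option ℕ → Set (H →L[ℂ] H) := fun k =>
  match k with
  | (some k1, some k2) => ALamFin A B' T' (k1, k2)
  | (some k1, none) =>
      {x | ∃ n : ℕ, n ≤ k1 ∧ x = P1 A B' T' (n, n)} ∪
      {x | ∃ l : ℕ, k1 ≤ l ∧ x = P3 A B' T' (k1, l)}
  | (none, some k2) =>
      {x | ∃ n : ℕ, n ≤ k2 ∧ x = P1 A B' T' (n, n)} ∪
      {x | ∃ l : ℕ, k2 ≤ l ∧ x = P2 A B' T' (l, k2)}
  | (none, none) => {x | ∃ l : ℕ, x = P1 A B' T' (l, l)}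

/-- The character (indicator function) of a subset. -/
def charOf {X : Type} (s : Set X) : X → Bool := fun x => decide (x ∈ s)

/-- Characters on `E`: nonzero multiplicative `{0,1}`-valued maps killing `0`. -/
def IsChar {X : Type} [Ring X] (E : Set X) (x : X → Bool) : Prop :=
  (∃ a ∈ E, x a = true) ∧ x 0 = false ∧ ∀ a ∈ E, ∀ b ∈ E, x (a * b) = (x a && x b)

/-- `n ≤ k` for `n : ℕ` and `k ∈ ℕ∪{∞}` (`∞ = none`). -/
def leO (n : ℕ) (k : Option ℕ) : Prop := ∀ m : ℕ, k = some m → n ≤ m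

/-- The domain set `D_s = {x ∈ Ê_tight : x(s s*) = 1}` (tight = ultrafilter characters). -/
def Dset (A B' : H →L[ℂ] H) (T' : ℤ → (H →L[ℂ] H)) (s : H →L[ℂ] H) :
    Set ((H →L[ℂ] H) → Bool) :=
  {x | (∃ Aset, IsUltrafilterIn (ESet A B' T') Aset ∧ x = charOf Aset) ∧
    x (s * adjoint s) = true}

/- ======================= auxiliary development ======================= -/

section AuxDev

lemma clm_ext (e : HilbertBasis (ℕ × ℕ × ℤ) ℂ H) {f g : H →L[ℂ] H}
    (h : ∀ v, f (e v) = g (e v)) : f = g :=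
  ContinuousLinearMap.ext_on
    (Submodule.dense_iff_topologicalClosure_eq_top.mpr e.dense_span)
    (by rintro x ⟨v, rfl⟩; exact h v)

lemma e_ne (e : HilbertBasis (ℕ × ℕ × ℤ) ℂ H) (v : ℕ × ℕ × ℤ) : e v ≠ 0 := by
  intro h
  have := e.orthonormal.1 v
  rw [h] at this
  simp at this

inductive Mk : Type
  | ge : ℕ → Mk
  | eq : ℕ → Mk
def MS : Mk → ℕ → Prop
  | Mk.ge n, i => n ≤ i
  | Mk.eq n, i => i = n
def MO : Mk → Option ℕ → Prop
  | Mk.ge n, k => leO n k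
  | Mk.eq n, k => k = some n
def Vld : Mk × Mk → Prop
  | (Mk.ge a, Mk.ge b) => a = b
  | (Mk.ge a, Mk.eq b) => b ≤ a
  | (Mk.eq a, Mk.ge b) => a ≤ b
  | (Mk.eq _, Mk.eq _) => True
def meet' : Mk → Mk → Option Mk
  | Mk.ge a, Mk.ge b => some (Mk.ge (max a b))
  | Mk.ge a, Mk.eq b => if a ≤ b then some (Mk.eq b) else none
  | Mk.eq a, Mk.ge b => if b ≤ a then some (Mk.eq a) else none
  | Mk.eq a, Mk.eq b => if a = b then some (Mk.eq a) else none
lemma leO_some {n m : ℕ} : leO n (some m) ↔ n ≤ m :=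
  ⟨fun h => h m rfl, fun h m' e => by cases e; exact h⟩
lemma leO_none {n : ℕ} : leO n none := fun m h => by cases h

lemma MS_meet_none {m m' : Mk} (h : meet' m m' = none) (i : ℕ) :
    ¬ (MS m i ∧ MS m' i) := by
  cases m <;> cases m' <;>
    (simp only [meet'] at h; try split_ifs at h with hif) <;>
    first
      | (simp only [MS]; omega)
      | (exact nomatch h)

lemma MO_meet_some {m m' mm : Mk} (h : meet' m m' = some mm) (k : Option ℕ) :
    MO mm k ↔ (MO m k ∧ MO m' k) := by
  cases m <;> cases m' <;>
    (simp only [meet'] at h; try split_ifs at h with hif) <;>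
    first
      | (exact Option.noConfusion h)
      | (cases h;
          cases k <;> simp_all [MO, leO_some, leO_none, Option.some.injEq] <;> omega)

lemma MO_meet_none {m m' : Mk} (h : meet' m m' = none) (k : Option ℕ) :
    ¬ (MO m k ∧ MO m' k) := by
  cases m <;> cases m' <;>
    (simp only [meet'] at h; try split_ifs at h with hif) <;>
    first
      | (rintro ⟨h1, h2⟩;
          cases k <;> simp_all [MO, leO_some, leO_none] <;> omega)
      | (exact Option.noConfusion h)

lemma meet'_eq_left {m m' : Mk} (h : meet' m m' = some m) {k : Option ℕ} (hm : MO m k) :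
    MO m' k := ((MO_meet_some h k).mp hm).2

lemma meet'_wit {m : Mk} {n' : ℕ} (h : meet' m (Mk.eq n') ≠ none) : MO m (some n') := by
  cases m <;> (simp only [meet'] at h; split_ifs at h with hif) <;>
    simp_all [MO, leO_some]

lemma MO_exists_meet {m m' : Mk} {k : Option ℕ} (h1 : MO m k) (h2 : MO m' k) :
    ∃ mm, meet' m m' = some mm ∧ MO mm k := by
  cases m <;> cases m' <;> cases k <;>
    simp_all [MO, meet', leO_some, leO_none] <;>
    first
      | (refine ⟨?_, ?_⟩ <;> simp_all [leO_some, leO_none] <;> omega)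
      | omega

lemma Vld_meet {c d : Mk × Mk} {m1 m2 : Mk} (hc : Vld c) (hd : Vld d)
    (h1 : meet' c.1 d.1 = some m1) (h2 : meet' c.2 d.2 = some m2) : Vld (m1, m2) := by
  obtain ⟨c1, c2⟩ := c; obtain ⟨d1, d2⟩ := d
  cases c1 <;> cases c2 <;> cases d1 <;> cases d2 <;>
    simp only [Vld, meet'] at hc hd h1 h2 ⊢ <;>
    (try split_ifs at h1 with ha) <;> (try split_ifs at h2 with hb) <;>
    first
      | (exact Option.noConfusion h1)
      | (exact Option.noConfusion h2)
      | (cases h1; cases h2;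
          simp only [Vld, Mk.ge.injEq, Mk.eq.injEq] <;> first | trivial | omega)

lemma MS_ext {m m' : Mk} (h : ∀ i, MS m i ↔ MS m' i) : m = m' := by
  cases m with
  | ge a => cases m' with
    | ge b =>
      have h1 := (h a).mp (by simp [MS])
      have h2 := (h b).mpr (by simp [MS])
      simp only [MS] at h1 h2
      simp only [Mk.ge.injEq]; omega
    | eq b =>
      exfalso
      have h1 := (h b).mpr (by simp [MS])
      have h2 := fun hh => (h (b + 1)).mp hh
      simp only [MS] at h1 h2; omega
  | eq a => cases m' with
    | ge b =>
      exfalso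
      have h1 := (h a).mp (by simp [MS])
      have h2 := fun hh => (h (a + 1)).mpr hh
      simp only [MS] at h1 h2; omega
    | eq b =>
      have h1 := (h a).mp (by simp [MS])
      simp only [MS] at h1
      simp only [Mk.eq.injEq]; omega

lemma MS_meet_some {m m' mm : Mk} (h : meet' m m' = some mm) (i : ℕ) :
    MS mm i ↔ (MS m i ∧ MS m' i) := by
  cases m <;> cases m' <;>
    (simp only [meet'] at h; try split_ifs at h with hif) <;>
    first
      | (exact Option.noConfusion h)
      | (cases h; simp only [MS]; omega)

def wit : Mk → ℕ
  | Mk.ge n => n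
  | Mk.eq n => n

lemma MS_wit (m : Mk) : MS m (wit m) := by cases m <;> simp [MS, wit]

def Fm (X : H →L[ℂ] H) : Mk → (H →L[ℂ] H)
  | Mk.ge n => (adjoint X) ^ n * X ^ n
  | Mk.eq n => (adjoint X) ^ n * pj X * X ^ n

def Pp (A B' : H →L[ℂ] H) (T' : ℤ → (H →L[ℂ] H)) (c : Mk × Mk) : H →L[ℂ] H :=
  Fm A c.1 * Fm B' c.2 * T' 0

lemma adjA (e : HilbertBasis (ℕ × ℕ × ℤ) ℂ H) (A : H →L[ℂ] H)
    (h0 : ∀ (j : ℕ) (k : ℤ), A (e (0, j, k)) = 0)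
    (hs : ∀ (i j : ℕ) (k : ℤ), A (e (i + 1, j, k)) = e (i, j, k)) :
    ∀ (i j : ℕ) (k : ℤ), adjoint A (e (i, j, k)) = e (i + 1, j, k) := by
  intro i j k
  apply e.repr.injective
  ext w
  rw [e.repr_apply_apply, e.repr_apply_apply, ContinuousLinearMap.adjoint_inner_right]
  obtain ⟨i', j', k'⟩ := w
  rcases i' with _ | i'
  · rw [h0, inner_zero_left, orthonormal_iff_ite.mp e.orthonormal]
    simp
  · rw [hs, orthonormal_iff_ite.mp e.orthonormal, orthonormal_iff_ite.mp e.orthonormal]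
    simp [Prod.ext_iff]

section act
variable (e : HilbertBasis (ℕ × ℕ × ℤ) ℂ H) (A : H →L[ℂ] H)
  (h0 : ∀ (j : ℕ) (k : ℤ), A (e (0, j, k)) = 0)
  (hs : ∀ (i j : ℕ) (k : ℤ), A (e (i + 1, j, k)) = e (i, j, k))
  (ha : ∀ (i j : ℕ) (k : ℤ), adjoint A (e (i, j, k)) = e (i + 1, j, k))

include hs in
lemma pow_act : ∀ (n i j : ℕ) (k : ℤ), (A ^ n) (e (i + n, j, k)) = e (i, j, k) := by
  intro n
  induction n with
  | zero => simp
  | succ n ih =>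
    intro i j k
    rw [pow_succ, ContinuousLinearMap.mul_apply]
    rw [show i + (n+1) = (i + n) + 1 from rfl, hs, ih]

include h0 hs in
lemma pow_zero_act : ∀ (n i j : ℕ) (k : ℤ), i < n → (A ^ n) (e (i, j, k)) = 0 := by
  intro n
  induction n with
  | zero => intro i j k h; omega
  | succ n ih =>
    intro i j k h
    rw [pow_succ, ContinuousLinearMap.mul_apply]
    rcases i with _ | i
    · rw [h0, map_zero]
    · rw [hs, ih] ; omega

include ha in
lemma adj_pow_act : ∀ (n i j : ℕ) (k : ℤ), ((adjoint A) ^ n) (e (i, j, k)) = e (i + n, j, k) := by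
  intro n
  induction n with
  | zero => simp
  | succ n ih =>
    intro i j k
    rw [pow_succ', ContinuousLinearMap.mul_apply, ih, ha, show i + n + 1 = i + (n+1) by omega]

include h0 hs ha in
lemma pj_act : ∀ (i j : ℕ) (k : ℤ), pj A (e (i, j, k)) = if i = 0 then e (i, j, k) else 0 := by
  intro i j k
  rcases i with _ | i
  · simp [pj, sub_apply, mul_apply, h0]
  · simp [pj, sub_apply, mul_apply, hs, ha]

include h0 hs ha in
lemma Fm_act (m : Mk) : ∀ (i j : ℕ) (k : ℤ),
    Fm A m (e (i, j, k)) = if MS m i then e (i, j, k) else 0 := by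
  intro i j k
  cases m with
  | ge n =>
    rcases le_or_gt n i with hle | hlt
    · obtain ⟨d, rfl⟩ : ∃ d, i = d + n := ⟨i - n, by omega⟩
      rw [Fm, ContinuousLinearMap.mul_apply, pow_act e A hs, adj_pow_act e A ha, if_pos (by simpa [MS] using hle)]
    · rw [Fm, ContinuousLinearMap.mul_apply, pow_zero_act e A h0 hs _ _ _ _ hlt, map_zero,
        if_neg (by simp [MS]; omega)]
  | eq n =>
    rcases le_or_gt n i with hle | hlt
    · obtain ⟨d, rfl⟩ : ∃ d, i = d + n := ⟨i - n, by omega⟩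
      rw [Fm, ContinuousLinearMap.mul_apply, ContinuousLinearMap.mul_apply, pow_act e A hs, pj_act e A h0 hs ha]
      rcases Nat.eq_zero_or_pos d with rfl | hd
      · rw [if_pos rfl, adj_pow_act e A ha, if_pos (by simp [MS])]
      · rw [if_neg (by omega), map_zero, if_neg (by simp [MS]; omega)]
    · rw [Fm, ContinuousLinearMap.mul_apply, ContinuousLinearMap.mul_apply, pow_zero_act e A h0 hs _ _ _ _ hlt, map_zero, map_zero,
        if_neg (by simp [MS]; omega)]
end act

section act2
variable (e : HilbertBasis (ℕ × ℕ × ℤ) ℂ H) (B' : H →L[ℂ] H)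
  (h0 : ∀ (i : ℕ) (k : ℤ), B' (e (i, 0, k)) = 0)
  (hs : ∀ (i j : ℕ) (k : ℤ), B' (e (i, j + 1, k)) = e (i, j, k))

include h0 hs in
lemma adjB (i j : ℕ) (k : ℤ) : adjoint B' (e (i, j, k)) = e (i, j + 1, k) := by
  apply e.repr.injective
  ext w
  rw [e.repr_apply_apply, e.repr_apply_apply, ContinuousLinearMap.adjoint_inner_right]
  obtain ⟨i', j', k'⟩ := w
  rcases j' with _ | j'
  · rw [h0, inner_zero_left, orthonormal_iff_ite.mp e.orthonormal]
    simp
  · rw [hs, orthonormal_iff_ite.mp e.orthonormal, orthonormal_iff_ite.mp e.orthonormal]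
    simp [Prod.ext_iff]

include hs in
lemma pow_act2 : ∀ (n i j : ℕ) (k : ℤ), (B' ^ n) (e (i, j + n, k)) = e (i, j, k) := by
  intro n
  induction n with
  | zero => simp
  | succ n ih =>
    intro i j k
    rw [pow_succ, ContinuousLinearMap.mul_apply]
    rw [show j + (n+1) = (j + n) + 1 from rfl, hs, ih]

include h0 hs in
lemma pow_zero_act2 : ∀ (n i j : ℕ) (k : ℤ), j < n → (B' ^ n) (e (i, j, k)) = 0 := by
  intro n
  induction n with
  | zero => intro i j k h; omega
  | succ n ih =>
    intro i j k h
    rw [pow_succ, ContinuousLinearMap.mul_apply]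
    rcases j with _ | j
    · rw [h0, map_zero]
    · rw [hs, ih] ; omega

include h0 hs in
lemma adj_pow_act2 : ∀ (n i j : ℕ) (k : ℤ), ((adjoint B') ^ n) (e (i, j, k)) = e (i, j + n, k) := by
  intro n
  induction n with
  | zero => simp
  | succ n ih =>
    intro i j k
    rw [pow_succ', ContinuousLinearMap.mul_apply, ih, adjB e B' h0 hs, show j + n + 1 = j + (n+1) by omega]

include h0 hs in
lemma pj_act2 : ∀ (i j : ℕ) (k : ℤ), pj B' (e (i, j, k)) = if j = 0 then e (i, j, k) else 0 := by
  intro i j k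
  rcases j with _ | j
  · simp [pj, sub_apply, mul_apply, h0]
  · simp [pj, sub_apply, mul_apply, hs, adjB e B' h0 hs]

include h0 hs in
lemma Fm_act2 (m : Mk) : ∀ (i j : ℕ) (k : ℤ),
    Fm B' m (e (i, j, k)) = if MS m j then e (i, j, k) else 0 := by
  intro i j k
  cases m with
  | ge n =>
    rcases le_or_gt n j with hle | hlt
    · obtain ⟨d, rfl⟩ : ∃ d, j = d + n := ⟨j - n, by omega⟩
      rw [Fm, ContinuousLinearMap.mul_apply, pow_act2 e B' hs, adj_pow_act2 e B' h0 hs,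
        if_pos (by simpa [MS] using hle)]
    · rw [Fm, ContinuousLinearMap.mul_apply, pow_zero_act2 e B' h0 hs _ _ _ _ hlt, map_zero,
        if_neg (by simp [MS]; omega)]
  | eq n =>
    rcases le_or_gt n j with hle | hlt
    · obtain ⟨d, rfl⟩ : ∃ d, j = d + n := ⟨j - n, by omega⟩
      rw [Fm, ContinuousLinearMap.mul_apply, ContinuousLinearMap.mul_apply, pow_act2 e B' hs, pj_act2 e B' h0 hs]
      rcases Nat.eq_zero_or_pos d with rfl | hd
      · rw [if_pos rfl, adj_pow_act2 e B' h0 hs, if_pos (by simp [MS])]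
      · rw [if_neg (by omega), map_zero, if_neg (by simp [MS]; omega)]
    · rw [Fm, ContinuousLinearMap.mul_apply, ContinuousLinearMap.mul_apply, pow_zero_act2 e B' h0 hs _ _ _ _ hlt, map_zero, map_zero,
        if_neg (by simp [MS]; omega)]
end act2
section Main
variable (e : HilbertBasis (ℕ × ℕ × ℤ) ℂ H) (A B' : H →L[ℂ] H)
  (T' : ℤ → (H →L[ℂ] H)) (hyp : ShiftHyp e A B' T')

include hyp in
lemma Pp_act (c : Mk × Mk) (i j : ℕ) (k : ℤ) :
    Pp A B' T' c (e (i, j, k)) = if MS c.1 i ∧ MS c.2 j then e (i, j, k) else 0 := by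
  obtain ⟨hA0, hA1, hB0, hB1, hT⟩ := hyp
  have hAa := adjA e A hA0 hA1
  rw [Pp, ContinuousLinearMap.mul_apply, ContinuousLinearMap.mul_apply, hT, add_zero, Fm_act2 e B' hB0 hB1]
  by_cases h2 : MS c.2 j
  · rw [if_pos h2, Fm_act e A hA0 hA1 hAa]
    by_cases h1 : MS c.1 i
    · rw [if_pos h1, if_pos ⟨h1, h2⟩]
    · rw [if_neg h1, if_neg (by tauto)]
  · rw [if_neg h2, map_zero, if_neg (by tauto)]

include hyp in
lemma Pp_ne (c : Mk × Mk) : Pp A B' T' c ≠ 0 := by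
  intro h
  have h2 := congrArg (fun (f : H →L[ℂ] H) => f (e (wit c.1, wit c.2, 0))) h
  simp only [ContinuousLinearMap.zero_apply] at h2
  rw [Pp_act e A B' T' hyp c, if_pos ⟨MS_wit c.1, MS_wit c.2⟩] at h2
  exact e_ne e _ h2

include hyp in
lemma Pp_inj {c d : Mk × Mk} (h : Pp A B' T' c = Pp A B' T' d) : c = d := by
  have key : ∀ i j, (MS c.1 i ∧ MS c.2 j) ↔ (MS d.1 i ∧ MS d.2 j) := by
    intro i j
    have h2 := congrArg (fun (f : H →L[ℂ] H) => f (e (i, j, 0))) h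
    rw [Pp_act e A B' T' hyp c, Pp_act e A B' T' hyp d] at h2
    constructor <;> intro hh
    · by_contra hd
      rw [if_pos hh, if_neg hd] at h2; exact e_ne e _ h2
    · by_contra hc
      rw [if_pos hh, if_neg hc] at h2; exact e_ne e _ h2.symm
  obtain ⟨c1, c2⟩ := c; obtain ⟨d1, d2⟩ := d
  simp only at key
  have h1 : ∀ i, MS c1 i ↔ MS d1 i := by
    intro i
    constructor
    · intro hi; exact ((key i (wit c2)).mp ⟨hi, MS_wit c2⟩).1
    · intro hi; exact ((key i (wit d2)).mpr ⟨hi, MS_wit d2⟩).1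
  have h2 : ∀ j, MS c2 j ↔ MS d2 j := by
    intro j
    constructor
    · intro hj; exact ((key (wit c1) j).mp ⟨MS_wit c1, hj⟩).2
    · intro hj; exact ((key (wit d1) j).mpr ⟨MS_wit d1, hj⟩).2
  exact Prod.ext (MS_ext h1) (MS_ext h2)

include hyp in
lemma Pp_mul_some {c d : Mk × Mk} {m1 m2 : Mk}
    (h1 : meet' c.1 d.1 = some m1) (h2 : meet' c.2 d.2 = some m2) :
    Pp A B' T' c * Pp A B' T' d = Pp A B' T' (m1, m2) := by
  apply clm_ext e
  rintro ⟨i, j, k⟩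
  rw [ContinuousLinearMap.mul_apply, Pp_act e A B' T' hyp d, Pp_act e A B' T' hyp (m1, m2)]
  have k1 : MS (m1, m2).1 i ↔ MS c.1 i ∧ MS d.1 i := MS_meet_some h1 i
  have k2 : MS (m1, m2).2 j ↔ MS c.2 j ∧ MS d.2 j := MS_meet_some h2 j
  by_cases hd : MS d.1 i ∧ MS d.2 j
  · rw [if_pos hd, Pp_act e A B' T' hyp c]
    by_cases hc : MS c.1 i ∧ MS c.2 j
    · rw [if_pos hc, if_pos (by tauto)]
    · rw [if_neg hc, if_neg (by tauto)]
  · rw [if_neg hd, map_zero, if_neg (by tauto)]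

include hyp in
lemma Pp_mul_none {c d : Mk × Mk}
    (h : meet' c.1 d.1 = none ∨ meet' c.2 d.2 = none) :
    Pp A B' T' c * Pp A B' T' d = 0 := by
  apply clm_ext e
  rintro ⟨i, j, k⟩
  rw [ContinuousLinearMap.mul_apply, Pp_act e A B' T' hyp d, ContinuousLinearMap.zero_apply]
  by_cases hd : MS d.1 i ∧ MS d.2 j
  · rw [if_pos hd, Pp_act e A B' T' hyp c, if_neg ?_, ]
    rcases h with h | h
    · have := MS_meet_none h i; tauto
    · have := MS_meet_none h j; tauto
  · rw [if_neg hd, map_zero]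

lemma P1_eq (n : ℕ) : P1 A B' T' (n, n) = Pp A B' T' (Mk.ge n, Mk.ge n) := by
  simp [P1, B1, Pp, Fm, mul_assoc]

lemma P2_eq (n : ℕ × ℕ) : P2 A B' T' n = Pp A B' T' (Mk.ge n.1, Mk.eq n.2) := by
  simp [P2, B2, Pp, Fm, mul_assoc]

lemma P3_eq (n : ℕ × ℕ) : P3 A B' T' n = Pp A B' T' (Mk.eq n.1, Mk.ge n.2) := by
  simp [P3, B3, Pp, Fm, mul_assoc]

lemma P4_eq (n : ℕ × ℕ) : P4 A B' T' n = Pp A B' T' (Mk.eq n.1, Mk.eq n.2) := by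
  simp [P4, B4, Pp, Fm, mul_assoc]

lemma mem_ESet {x : H →L[ℂ] H} :
    x ∈ ESet A B' T' ↔ x = 0 ∨ ∃ c, Vld c ∧ x = Pp A B' T' c := by
  unfold ESet
  simp only [Set.mem_union, Set.mem_singleton_iff, Set.mem_setOf_eq]
  constructor
  · rintro ((((h | ⟨n, rfl⟩) | ⟨n, hn, rfl⟩) | ⟨n, hn, rfl⟩) | ⟨n, rfl⟩)
    · exact Or.inl h
    · exact Or.inr ⟨(Mk.ge n, Mk.ge n), rfl, P1_eq A B' T' n⟩
    · exact Or.inr ⟨(Mk.ge n.1, Mk.eq n.2), hn, P2_eq A B' T' n⟩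
    · exact Or.inr ⟨(Mk.eq n.1, Mk.ge n.2), hn, P3_eq A B' T' n⟩
    · exact Or.inr ⟨(Mk.eq n.1, Mk.eq n.2), trivial, P4_eq A B' T' n⟩
  · rintro (rfl | ⟨⟨c1, c2⟩, hv, rfl⟩)
    · exact Or.inl (Or.inl (Or.inl (Or.inl rfl)))
    · cases c1 with
      | ge a => cases c2 with
        | ge b =>
          have hab : a = b := hv
          subst hab
          exact Or.inl (Or.inl (Or.inl (Or.inr ⟨a, (P1_eq A B' T' a).symm⟩)))
        | eq b =>
          exact Or.inl (Or.inl (Or.inr ⟨(a, b), hv, (P2_eq A B' T' (a, b)).symm⟩))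
      | eq a => cases c2 with
        | ge b =>
          exact Or.inl (Or.inr ⟨(a, b), hv, (P3_eq A B' T' (a, b)).symm⟩)
        | eq b =>
          exact Or.inr ⟨(a, b), (P4_eq A B' T' (a, b)).symm⟩

lemma ALam_sup (k : Option ℕ × Option ℕ) (c : Mk × Mk) (hv : Vld c)
    (h1 : MO c.1 k.1) (h2 : MO c.2 k.2) : Pp A B' T' c ∈ ALam A B' T' k := by
  obtain ⟨c1, c2⟩ := c
  obtain ⟨k1, k2⟩ := k
  cases c1 with
  | ge a => cases c2 with
    | ge b =>
      have hab : a = b := hv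
      subst hab
      cases k1 with
      | none => cases k2 with
        | none => exact ⟨a, (P1_eq A B' T' a).symm⟩
        | some v =>
          exact Or.inl ⟨a, leO_some.mp h2, (P1_eq A B' T' a).symm⟩
      | some u => cases k2 with
        | none => exact Or.inl ⟨a, leO_some.mp h1, (P1_eq A B' T' a).symm⟩
        | some v =>
          exact Or.inl (Or.inl (Or.inl ⟨a, le_min (leO_some.mp h1) (leO_some.mp h2),
            (P1_eq A B' T' a).symm⟩))
    | eq b =>
      simp only [MO] at h1 h2
      cases k1 with
      | none => cases k2 with
        | none => exact absurd h2 (by simp)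
        | some v =>
          cases h2
          exact Or.inr ⟨a, hv, by rw [P2_eq]⟩
      | some u => cases k2 with
        | none => exact absurd h2 (by simp)
        | some v =>
          cases h2
          exact Or.inl (Or.inl (Or.inr ⟨(a, b), rfl, hv, leO_some.mp h1, (P2_eq A B' T' (a, b)).symm⟩))
  | eq a => cases c2 with
    | ge b =>
      simp only [MO] at h1 h2
      cases k1 with
      | none => exact absurd h1 (by simp)
      | some u =>
        cases h1
        cases k2 with
        | none => exact Or.inr ⟨b, hv, by rw [P3_eq]⟩
        | some v =>
          exact Or.inl (Or.inr ⟨(a, b), rfl, hv, leO_some.mp h2, (P3_eq A B' T' (a, b)).symm⟩)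
    | eq b =>
      simp only [MO] at h1 h2
      cases k1 with
      | none => exact absurd h1 (by simp)
      | some u =>
        cases h1
        cases k2 with
        | none => exact absurd h2 (by simp)
        | some v =>
          cases h2
          refine Or.inr ?_
          rw [Set.mem_singleton_iff, P4_eq]

lemma ALam_sub (k : Option ℕ × Option ℕ) {x : H →L[ℂ] H} (hx : x ∈ ALam A B' T' k) :
    ∃ c, Vld c ∧ MO c.1 k.1 ∧ MO c.2 k.2 ∧ x = Pp A B' T' c := by
  obtain ⟨k1, k2⟩ := k
  cases k1 with
  | some u => cases k2 with
    | some v =>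
      rcases hx with ((⟨n, hn, rfl⟩ | ⟨n, hn1, hn2, hn3, rfl⟩) | ⟨n, hn1, hn2, hn3, rfl⟩) | hx
      · exact ⟨(Mk.ge n, Mk.ge n), rfl, leO_some.mpr (by omega), leO_some.mpr (by omega),
          P1_eq A B' T' n⟩
      · exact ⟨(Mk.ge n.1, Mk.eq n.2), hn2, leO_some.mpr hn3, by rw [MO, hn1],
          P2_eq A B' T' n⟩
      · exact ⟨(Mk.eq n.1, Mk.ge n.2), hn2, by rw [MO, hn1], leO_some.mpr hn3,
          P3_eq A B' T' n⟩
      · rw [Set.mem_singleton_iff] at hx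
        exact ⟨(Mk.eq u, Mk.eq v), trivial, rfl, rfl, by rw [hx, P4_eq]⟩
    | none =>
      rcases hx with ⟨n, hn, rfl⟩ | ⟨l, hl, rfl⟩
      · exact ⟨(Mk.ge n, Mk.ge n), rfl, leO_some.mpr hn, leO_none, P1_eq A B' T' n⟩
      · exact ⟨(Mk.eq u, Mk.ge l), hl, rfl, leO_none, P3_eq A B' T' (u, l)⟩
  | none => cases k2 with
    | some v =>
      rcases hx with ⟨n, hn, rfl⟩ | ⟨l, hl, rfl⟩
      · exact ⟨(Mk.ge n, Mk.ge n), rfl, leO_none, leO_some.mpr hn, P1_eq A B' T' n⟩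
      · exact ⟨(Mk.ge l, Mk.eq v), hl, leO_none, rfl, P2_eq A B' T' (l, v)⟩
    | none =>
      obtain ⟨l, rfl⟩ := hx
      exact ⟨(Mk.ge l, Mk.ge l), rfl, leO_none, leO_none, P1_eq A B' T' l⟩

include hyp in
lemma mem_ALam (k : Option ℕ × Option ℕ) (c : Mk × Mk) :
    Pp A B' T' c ∈ ALam A B' T' k ↔ (Vld c ∧ MO c.1 k.1 ∧ MO c.2 k.2) := by
  constructor
  · intro hx
    obtain ⟨d, hv, h1, h2, hd⟩ := ALam_sub A B' T' k hx
    obtain rfl := Pp_inj e A B' T' hyp hd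
    exact ⟨hv, h1, h2⟩
  · rintro ⟨hv, h1, h2⟩
    exact ALam_sup A B' T' k c hv h1 h2

include hyp in
lemma charOf_Pp (k : Option ℕ × Option ℕ) (c : Mk × Mk) (hv : Vld c) :
    charOf (ALam A B' T' k) (Pp A B' T' c) = decide (MO c.1 k.1 ∧ MO c.2 k.2) := by
  unfold charOf
  apply decide_eq_decide.mpr
  rw [mem_ALam e A B' T' hyp k c]
  tauto
end Main

section Main2
variable (e : HilbertBasis (ℕ × ℕ × ℤ) ℂ H) (A B' : H →L[ℂ] H)
  (T' : ℤ → (H →L[ℂ] H)) (hyp : ShiftHyp e A B' T')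

lemma MO_ge_zero (k : Option ℕ) : MO (Mk.ge 0) k := by
  cases k with
  | none => exact leO_none
  | some v => exact leO_some.mpr (Nat.zero_le v)

lemma MO_all_none {k : Option ℕ} (h : ∀ l, MO (Mk.ge l) k) : k = none := by
  cases k with
  | none => rfl
  | some m => have := leO_some.mp (h (m + 1)); omega

include hyp in
lemma ALam_filter (k : Option ℕ × Option ℕ) :
    IsFilterIn (ESet A B' T') (ALam A B' T' k) := by
  refine ⟨?_, ?_, ?_, ?_⟩
  · intro x hx
    obtain ⟨c, hv, -, -, rfl⟩ := ALam_sub A B' T' k hx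
    exact (mem_ESet A B' T').mpr (Or.inr ⟨c, hv, rfl⟩)
  · intro h0
    obtain ⟨c, -, -, -, hc⟩ := ALam_sub A B' T' k h0
    exact Pp_ne e A B' T' hyp c hc.symm
  · intro a ha f hf haf
    obtain ⟨c, hvc, h1, h2, rfl⟩ := ALam_sub A B' T' k ha
    rcases (mem_ESet A B' T').mp hf with rfl | ⟨d, hvd, rfl⟩
    · rw [mul_zero] at haf
      exact absurd haf.symm (Pp_ne e A B' T' hyp c)
    · rcases hm1 : meet' c.1 d.1 with _ | m1
      · rw [Pp_mul_none e A B' T' hyp (Or.inl hm1)] at haf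
        exact absurd haf.symm (Pp_ne e A B' T' hyp c)
      · rcases hm2 : meet' c.2 d.2 with _ | m2
        · rw [Pp_mul_none e A B' T' hyp (Or.inr hm2)] at haf
          exact absurd haf.symm (Pp_ne e A B' T' hyp c)
        · rw [Pp_mul_some e A B' T' hyp hm1 hm2] at haf
          have hcc := Pp_inj e A B' T' hyp haf
          cases hcc
          exact ALam_sup A B' T' k d hvd (meet'_eq_left hm1 h1) (meet'_eq_left hm2 h2)
  · intro a ha b hb
    obtain ⟨c, hvc, h1, h2, rfl⟩ := ALam_sub A B' T' k ha
    obtain ⟨d, hvd, h1', h2', rfl⟩ := ALam_sub A B' T' k hb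
    obtain ⟨mm1, hmm1, hMO1⟩ := MO_exists_meet h1 h1'
    obtain ⟨mm2, hmm2, hMO2⟩ := MO_exists_meet h2 h2'
    rw [Pp_mul_some e A B' T' hyp hmm1 hmm2]
    exact ALam_sup A B' T' k _ (Vld_meet hvc hvd hmm1 hmm2) hMO1 hMO2

include hyp in
lemma filter_subset_ALam {F : Set (H →L[ℂ] H)} (hF : IsFilterIn (ESet A B' T') F) :
    ∃ k, F ⊆ ALam A B' T' k := by
  classical
  have key : ∀ c d : Mk × Mk, Pp A B' T' c ∈ F → Pp A B' T' d ∈ F →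
      meet' c.1 d.1 ≠ none ∧ meet' c.2 d.2 ≠ none := by
    intro c d hc hd
    have hm := hF.2.2.2 _ hc _ hd
    constructor <;> intro hn
    · rw [Pp_mul_none e A B' T' hyp (Or.inl hn)] at hm; exact hF.2.1 hm
    · rw [Pp_mul_none e A B' T' hyp (Or.inr hn)] at hm; exact hF.2.1 hm
  have memPp : ∀ a ∈ F, ∃ c, Vld c ∧ a = Pp A B' T' c := by
    intro a ha
    rcases (mem_ESet A B' T').mp (hF.1 ha) with rfl | hc
    · exact absurd ha hF.2.1
    · exact hc
  refine ⟨(if h : ∃ n c2, Pp A B' T' (Mk.eq n, c2) ∈ F then some h.choose else none,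
           if h : ∃ n c1, Pp A B' T' (c1, Mk.eq n) ∈ F then some h.choose else none), ?_⟩
  intro a ha
  obtain ⟨⟨c1, c2⟩, hv, rfl⟩ := memPp a ha
  refine ALam_sup A B' T' _ _ hv ?_ ?_
  · by_cases h : ∃ n c2', Pp A B' T' (Mk.eq n, c2') ∈ F
    · simp only [dif_pos h]
      obtain ⟨c2', hw⟩ := h.choose_spec
      exact meet'_wit (key _ _ ha hw).1
    · simp only [dif_neg h]
      cases c1 with
      | ge n => exact leO_none
      | eq n => exact absurd ⟨n, c2, ha⟩ h
  · by_cases h : ∃ n c1', Pp A B' T' (c1', Mk.eq n) ∈ F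
    · simp only [dif_pos h]
      obtain ⟨c1', hw⟩ := h.choose_spec
      exact meet'_wit (key _ _ ha hw).2
    · simp only [dif_neg h]
      cases c2 with
      | ge n => exact leO_none
      | eq n => exact absurd ⟨n, c1, ha⟩ h

lemma MO_ge_mono {l l' : ℕ} (h : l ≤ l') {k : Option ℕ} (hk : MO (Mk.ge l') k) :
    MO (Mk.ge l) k := by
  cases k with
  | none => exact leO_none
  | some m => exact leO_some.mpr (le_trans h (leO_some.mp hk))

include hyp in
lemma ALam_mono {k k' : Option ℕ × Option ℕ}
    (h : ALam A B' T' k ⊆ ALam A B' T' k') : k = k' := by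
  have get : ∀ c, Vld c → MO c.1 k.1 → MO c.2 k.2 → (MO c.1 k'.1 ∧ MO c.2 k'.2) := by
    intro c hv h1 h2
    have := (mem_ALam e A B' T' hyp k' c).mp (h (ALam_sup A B' T' k c hv h1 h2))
    exact ⟨this.2.1, this.2.2⟩
  obtain ⟨k1, k2⟩ := k
  obtain ⟨k1', k2'⟩ := k'
  simp only at get
  rw [Prod.mk.injEq]
  cases k1 with
  | some a => cases k2 with
    | some b =>
      obtain ⟨ha, hb⟩ := get (Mk.eq a, Mk.eq b) trivial rfl rfl
      exact ⟨ha.symm, hb.symm⟩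
    | none =>
      have hl : ∀ l, a ≤ l → (MO (Mk.eq a) k1' ∧ MO (Mk.ge l) k2') :=
        fun l hal => get (Mk.eq a, Mk.ge l) hal rfl leO_none
      refine ⟨((hl a le_rfl).1 : k1' = some a).symm, (MO_all_none fun l => ?_).symm⟩
      exact MO_ge_mono (le_max_left l a) (hl (max l a) (le_max_right l a)).2
  | none => cases k2 with
    | some b =>
      have hl : ∀ l, b ≤ l → (MO (Mk.ge l) k1' ∧ MO (Mk.eq b) k2') :=
        fun l hbl => get (Mk.ge l, Mk.eq b) hbl leO_none rfl
      refine ⟨(MO_all_none fun l => ?_).symm, ((hl b le_rfl).2 : k2' = some b).symm⟩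
      exact MO_ge_mono (le_max_left l b) (hl (max l b) (le_max_right l b)).1
    | none =>
      have hl : ∀ l, (MO (Mk.ge l) k1' ∧ MO (Mk.ge l) k2') :=
        fun l => get (Mk.ge l, Mk.ge l) rfl leO_none leO_none
      exact ⟨(MO_all_none fun l => (hl l).1).symm, (MO_all_none fun l => (hl l).2).symm⟩

include hyp in
lemma ALam_ultra (k : Option ℕ × Option ℕ) :
    IsUltrafilterIn (ESet A B' T') (ALam A B' T' k) := by
  refine ⟨ALam_filter e A B' T' hyp k, fun B hB hsub => ?_⟩
  obtain ⟨k', hk'⟩ := filter_subset_ALam e A B' T' hyp hB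
  have hkk : k = k' := ALam_mono e A B' T' hyp (hsub.trans hk')
  subst hkk
  exact Set.Subset.antisymm hk' hsub

include hyp in
lemma ultra_to {F : Set (H →L[ℂ] H)} (hF : IsUltrafilterIn (ESet A B' T') F) :
    ∃ k, F = ALam A B' T' k := by
  obtain ⟨k, hk⟩ := filter_subset_ALam e A B' T' hyp hF.1
  exact ⟨k, (hF.2 _ (ALam_filter e A B' T' hyp k) hk).symm⟩

include hyp in
lemma char_zero (k : Option ℕ × Option ℕ) : charOf (ALam A B' T' k) 0 = false := by
  simp only [charOf, decide_eq_false_iff_not]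
  intro h0
  obtain ⟨c, -, -, -, hc⟩ := ALam_sub A B' T' k h0
  exact Pp_ne e A B' T' hyp c hc.symm

include hyp in
lemma char_ALam (k : Option ℕ × Option ℕ) :
    IsChar (ESet A B' T') (charOf (ALam A B' T' k)) := by
  refine ⟨⟨Pp A B' T' (Mk.ge 0, Mk.ge 0),
      (mem_ESet A B' T').mpr (Or.inr ⟨(Mk.ge 0, Mk.ge 0), rfl, rfl⟩), ?_⟩, char_zero e A B' T' hyp k, ?_⟩
  · simp only [charOf, decide_eq_true_eq]
    exact ALam_sup A B' T' k _ rfl (MO_ge_zero k.1) (MO_ge_zero k.2)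
  · intro a haE b hbE
    rcases (mem_ESet A B' T').mp haE with rfl | ⟨c, hvc, rfl⟩
    · rw [zero_mul, char_zero e A B' T' hyp k, Bool.false_and]
    rcases (mem_ESet A B' T').mp hbE with rfl | ⟨d, hvd, rfl⟩
    · rw [mul_zero, char_zero e A B' T' hyp k, Bool.and_false]
    rcases hm1 : meet' c.1 d.1 with _ | m1
    · rw [Pp_mul_none e A B' T' hyp (Or.inl hm1), char_zero e A B' T' hyp k,
        charOf_Pp e A B' T' hyp k c hvc, charOf_Pp e A B' T' hyp k d hvd, ← Bool.decide_and]
      symm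
      rw [decide_eq_false_iff_not]
      have := MO_meet_none hm1 k.1
      tauto
    · rcases hm2 : meet' c.2 d.2 with _ | m2
      · rw [Pp_mul_none e A B' T' hyp (Or.inr hm2), char_zero e A B' T' hyp k,
          charOf_Pp e A B' T' hyp k c hvc, charOf_Pp e A B' T' hyp k d hvd, ← Bool.decide_and]
        symm
        rw [decide_eq_false_iff_not]
        have := MO_meet_none hm2 k.2
        tauto
      · rw [Pp_mul_some e A B' T' hyp hm1 hm2,
          charOf_Pp e A B' T' hyp k _ (Vld_meet hvc hvd hm1 hm2),
          charOf_Pp e A B' T' hyp k c hvc, charOf_Pp e A B' T' hyp k d hvd, ← Bool.decide_and]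
        apply decide_eq_decide.mpr
        have hh1 : MO (m1, m2).1 k.1 ↔ (MO c.1 k.1 ∧ MO d.1 k.1) := MO_meet_some hm1 k.1
        have hh2 : MO (m1, m2).2 k.2 ↔ (MO c.2 k.2 ∧ MO d.2 k.2) := MO_meet_some hm2 k.2
        tauto

end Main2

section Topo

def ofO : OnePoint ℕ → Option ℕ := fun k => k

lemma open_MO (m : Mk) : IsOpen {k : OnePoint ℕ | MO m (ofO k)} := by
  rw [OnePoint.isOpen_def]
  refine ⟨?_, isOpen_discrete _⟩
  intro hinf
  apply Set.Finite.isCompact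
  cases m with
  | ge n =>
    apply Set.Finite.subset (Set.finite_Iio n)
    intro x hx
    simp only [Set.mem_compl_iff, Set.mem_preimage, Set.mem_setOf_eq] at hx
    simp only [Set.mem_Iio]
    by_contra hlt
    exact hx (leO_some.mpr (by omega))
  | eq n =>
    exfalso
    have hn : (none : Option ℕ) = some n := hinf
    exact nomatch hn

lemma open_not_MO (m : Mk) : IsOpen {k : OnePoint ℕ | ¬ MO m (ofO k)} := by
  rw [OnePoint.isOpen_def]
  refine ⟨?_, isOpen_discrete _⟩
  intro hinf
  cases m with
  | ge n => exact absurd leO_none hinf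
  | eq n =>
    apply Set.Finite.isCompact
    apply Set.Finite.subset (Set.finite_singleton n)
    intro x hx
    simp only [Set.mem_compl_iff, Set.mem_preimage, Set.mem_setOf_eq, not_not] at hx
    have : x = n := by
      have := (hx : (some x : Option ℕ) = some n)
      injection this
    simp [this]

lemma cont_decide_MO (m : Mk) :
    Continuous fun k : OnePoint ℕ => decide (MO m (ofO k)) := by
  rw [continuous_def]
  intro s _
  have hset : (fun k : OnePoint ℕ => decide (MO m (ofO k))) ⁻¹' s =
      ((if true ∈ s then {k : OnePoint ℕ | MO m (ofO k)} else ∅) ∪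
       (if false ∈ s then {k : OnePoint ℕ | ¬ MO m (ofO k)} else ∅)) := by
    ext k
    by_cases hmk : MO m (ofO k) <;> by_cases ht : true ∈ s <;> by_cases hf : false ∈ s <;>
      simp [Set.mem_preimage, hmk, ht, hf]
  rw [hset]
  apply IsOpen.union <;> split_ifs <;>
    first
      | exact open_MO m
      | exact open_not_MO m
      | exact isOpen_empty

end Topo

end AuxDev


theorem stmt12 {H : Type} [NormedAddCommGroup H] [InnerProductSpace ℂ H]
    [CompleteSpace H] (e : HilbertBasis (ℕ × ℕ × ℤ) ℂ H) (A B' : H →L[ℂ] H)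
    (T' : ℤ → (H →L[ℂ] H)) (hyp : ShiftHyp e A B' T') :
    IsClosed {y : {x : (H →L[ℂ] H) → Bool // IsChar (ESet A B' T') x} |
        ∃ Aset, IsUltrafilterIn (ESet A B' T') Aset ∧ (y : (H →L[ℂ] H) → Bool) = charOf Aset} ∧
    closure {y : {x : (H →L[ℂ] H) → Bool // IsChar (ESet A B' T') x} |
        ∃ Aset, IsUltrafilterIn (ESet A B' T') Aset ∧ (y : (H →L[ℂ] H) → Bool) = charOf Aset}
      = {y : {x : (H →L[ℂ] H) → Bool // IsChar (ESet A B' T') x} |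
        ∃ Aset, IsUltrafilterIn (ESet A B' T') Aset ∧
          (y : (H →L[ℂ] H) → Bool) = charOf Aset} := by
  classical
  set S := {y : {x : (H →L[ℂ] H) → Bool // IsChar (ESet A B' T') x} |
      ∃ Aset, IsUltrafilterIn (ESet A B' T') Aset ∧
        (y : (H →L[ℂ] H) → Bool) = charOf Aset} with hS
  let Φ : OnePoint ℕ × OnePoint ℕ → {x : (H →L[ℂ] H) → Bool // IsChar (ESet A B' T') x} :=
    fun k => ⟨charOf (ALam A B' T' (ofO k.1, ofO k.2)),
      char_ALam e A B' T' hyp (ofO k.1, ofO k.2)⟩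
  have hrange : S = Set.range Φ := by
    ext y
    simp only [hS, Set.mem_setOf_eq, Set.mem_range]
    constructor
    · rintro ⟨As, hu, hy⟩
      obtain ⟨k, rfl⟩ := ultra_to e A B' T' hyp hu
      exact ⟨(k.1, k.2), Subtype.ext hy.symm⟩
    · rintro ⟨k, rfl⟩
      exact ⟨ALam A B' T' (ofO k.1, ofO k.2), ALam_ultra e A B' T' hyp _, rfl⟩
  have hcont : Continuous Φ := by
    apply Continuous.subtype_mk
    apply continuous_pi
    intro s
    by_cases hs : ∃ c, Vld c ∧ s = Pp A B' T' c
    · obtain ⟨c, hvc, rfl⟩ := hs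
      have heq : (fun k : OnePoint ℕ × OnePoint ℕ =>
          charOf (ALam A B' T' (ofO k.1, ofO k.2)) (Pp A B' T' c))
          = fun k => (decide (MO c.1 (ofO k.1)) && decide (MO c.2 (ofO k.2))) := by
        funext kk
        rw [charOf_Pp e A B' T' hyp _ c hvc, Bool.decide_and]
      rw [heq]
      have h1 : Continuous fun k : OnePoint ℕ × OnePoint ℕ => decide (MO c.1 (ofO k.1)) :=
        (cont_decide_MO c.1).comp continuous_fst
      have h2 : Continuous fun k : OnePoint ℕ × OnePoint ℕ => decide (MO c.2 (ofO k.2)) :=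
        (cont_decide_MO c.2).comp continuous_snd
      exact (continuous_of_discreteTopology
        (f := fun p : Bool × Bool => p.1 && p.2)).comp (h1.prodMk h2)
    · have heq : (fun k : OnePoint ℕ × OnePoint ℕ =>
          charOf (ALam A B' T' (ofO k.1, ofO k.2)) s) = fun _ => false := by
        funext kk
        simp only [charOf, decide_eq_false_iff_not]
        intro hmem
        obtain ⟨c, hv, -, -, rfl⟩ := ALam_sub A B' T' _ hmem
        exact hs ⟨c, hv, rfl⟩
      rw [heq]
      exact continuous_const
  have hclosed : IsClosed S := by
    rw [hrange]
    exact (isCompact_range hcont).isClosed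
  exact ⟨hclosed, hclosed.closure_eq⟩


end SOq
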